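/- Continuing the BKM07 robustness argument: suppose additionally a unitary U_R on ℂ²⊗H_E satisfies U_R|0,e₀⟩ = |0,f₀⟩ and U_R|1,e₃⟩ = |1,f₃⟩ with unit vectors e₀, e₃, f₀, f₃ ∈ H_E. Then U_R U_F|+,χ⟩ = (1/2)|+⟩⊗(f₀+f₃) + (1/2)|−⟩⊗(f₀−f₃), and if the |−⟩ component vanishes (no X-basis error on reflection) then f₀ = f₃, so the output state is the product state |+⟩⊗f₀. -/

import Mathlib

/-- Elementary tensor of a (coefficient vector on) qubit with an ancilla vector. -/
noncomputable def tens {d : ℕ} (q : Fin 2 → ℂ) (v : EuclideanSpace ℂ (Fin d)) :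
    EuclideanSpace ℂ (Fin 2 × Fin d) :=
  WithLp.toLp 2 (fun p => q p.1 * v p.2)

/-- Computational basis coefficient vector |a⟩ of a qubit. -/
def ket (a : Fin 2) : Fin 2 → ℂ := fun b => if b = a then 1 else 0

/-- The |+⟩ coefficient vector. -/
noncomputable def ketP : Fin 2 → ℂ := fun _ => (Real.sqrt 2 : ℂ)⁻¹

/-- The |−⟩ coefficient vector. -/
noncomputable def ketM : Fin 2 → ℂ :=
  fun b => if b = 0 then (Real.sqrt 2 : ℂ)⁻¹ else -(Real.sqrt 2 : ℂ)⁻¹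

/-- BKM07 robustness, reverse channel.  With
U_R|0,e₀⟩ = |0,f₀⟩ and U_R|1,e₃⟩ = |1,f₃⟩, one has
U_RU_F|+,χ⟩ = (1/2)|+⟩⊗(f₀+f₃) + (1/2)|−⟩⊗(f₀−f₃), and if the |−⟩ component
vanishes then f₀ = f₃ and the output is the product state |+⟩⊗f₀. -/
theorem bkm07_reverse_robustness {d : ℕ}
    (UF UR : EuclideanSpace ℂ (Fin 2 × Fin d) ≃ₗᵢ[ℂ] EuclideanSpace ℂ (Fin 2 × Fin d))
    (χ e0 e3 f0 f3 : EuclideanSpace ℂ (Fin d))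
    (hχ : ‖χ‖ = 1) (he0 : ‖e0‖ = 1) (he3 : ‖e3‖ = 1) (hf0 : ‖f0‖ = 1) (hf3 : ‖f3‖ = 1)
    (hUF : UF (tens ketP χ) = (Real.sqrt 2 : ℂ)⁻¹ • (tens (ket 0) e0 + tens (ket 1) e3))
    (hUR0 : UR (tens (ket 0) e0) = tens (ket 0) f0)
    (hUR1 : UR (tens (ket 1) e3) = tens (ket 1) f3) :
    UR (UF (tens ketP χ)) =
        (1 / 2 : ℂ) • tens ketP (f0 + f3) + (1 / 2 : ℂ) • tens ketM (f0 - f3) ∧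
      ((1 / 2 : ℂ) • tens ketM (f0 - f3) = 0 →
        f0 = f3 ∧ UR (UF (tens ketP χ)) = tens ketP f0) := by
  have hs : (Real.sqrt 2 : ℂ) ≠ 0 := by
    norm_cast
    positivity
  have key : UR (UF (tens ketP χ)) =
      (Real.sqrt 2 : ℂ)⁻¹ • (tens (ket 0) f0 + tens (ket 1) f3) := by
    rw [hUF, map_smul, map_add, hUR0, hUR1]
  have h1 : UR (UF (tens ketP χ)) =
      (1 / 2 : ℂ) • tens ketP (f0 + f3) + (1 / 2 : ℂ) • tens ketM (f0 - f3) := by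
    rw [key]
    ext p
    obtain ⟨a, j⟩ := p
    fin_cases a <;>
      simp [tens, ket, ketP, ketM, PiLp.smul_apply, PiLp.add_apply, PiLp.sub_apply] <;>
      ring
  refine ⟨h1, fun hz => ?_⟩
  have hf : f0 = f3 := by
    ext j
    have := congrArg (fun v => v (0, j)) hz
    simp [tens, ketM, PiLp.smul_apply, PiLp.sub_apply, hs, sub_eq_zero] at this
    exact this
  refine ⟨hf, ?_⟩
  rw [key, hf]
  ext p
  obtain ⟨a, j⟩ := p
  fin_cases a <;> simp [tens, ket, ketP, PiLp.smul_apply, PiLp.add_apply]
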